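/- (Harmonic lifting estimates.) Let h > 0 and let ψ ∈ L²(T^d). Define ψ̲(x,z) for z ∈ [−h,0] via its Fourier coefficients by 𝓕ψ̲(ξ,z) = [e^{z|ξ|}/(1+e^{−2h|ξ|})] ψ̂(ξ) + [e^{−2h|ξ|−z|ξ|}/(1+e^{−2h|ξ|})] ψ̂(ξ), so that ∂_z²ψ̲ + Δ_x ψ̲ = 0, ψ̲|_{z=0} = ψ, ∂_zψ̲|_{z=−h} = 0. Then for every μ ∈ R there exists C > 0 such that for all σ ≥ 0 with a(D_x)^{1/2}ψ ∈ H^{σ,μ}: ‖∇_{x,z}ψ̲‖_{L²((−h,0), H^{σ,μ})} ≤ C ‖a(D_x)^{1/2}ψ‖_{H^{σ,μ}} and ‖∇_{x,z}ψ̲‖_{L^∞((−h,0), H^{σ,μ−1/2})} ≤ C ‖a(D_x)^{1/2}ψ‖_{H^{σ,μ}}. -/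

import Mathlib

open scoped ENNReal BigOperators

/-- Euclidean norm of a lattice point `ξ ∈ ℤ^d`. -/
noncomputable def latNorm {d : ℕ} (ξ : Fin d → ℤ) : ℝ :=
  Real.sqrt (∑ i, ((ξ i : ℝ)) ^ 2)

/-- Japanese bracket `⟨ξ⟩ = (1+|ξ|²)^{1/2}`. -/
noncomputable def latJap {d : ℕ} (ξ : Fin d → ℤ) : ℝ :=
  Real.sqrt (1 + ∑ i, ((ξ i : ℝ)) ^ 2)

/-- Weight `e^{2σ|ξ|}⟨ξ⟩^{2s}` of the analytic Sobolev space `H^{σ,s}(T^d)`. -/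
noncomputable def hWeight {d : ℕ} (σ s : ℝ) (ξ : Fin d → ℤ) : ℝ≥0∞ :=
  ENNReal.ofReal (Real.exp (2 * σ * latNorm ξ) * (latJap ξ) ^ (2 * s))

/-- Squared `H^{σ,s}(T^d)` norm of a function given by its Fourier
coefficients `c : ℤ^d → ℂ`. -/
noncomputable def hNormSq {d : ℕ} (σ s : ℝ) (c : (Fin d → ℤ) → ℂ) : ℝ≥0∞ :=
  ∑' ξ, hWeight σ s ξ * (‖c ξ‖₊ : ℝ≥0∞) ^ 2

/-- `H^{σ,s}(T^d)` norm. -/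
noncomputable def hNorm {d : ℕ} (σ s : ℝ) (c : (Fin d → ℤ) → ℂ) : ℝ≥0∞ :=
  (hNormSq σ s c) ^ (1/2 : ℝ)

/-- Convolution of Fourier coefficients: this represents the pointwise
product of the corresponding functions on `T^d` (up to the fixed
normalization factor `(2π)^{-d}`, harmless for the estimates below). -/
noncomputable def conv {d : ℕ} (f g : (Fin d → ℤ) → ℂ) : (Fin d → ℤ) → ℂ :=
  fun ξ => ∑' ζ, f (ξ - ζ) * g ζ

open MeasureTheory

/-- Multiplier of the harmonic lifting:
`𝓕ψ̲(ξ,z) = liftP h ξ z ψ̂(ξ)`. -/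
noncomputable def liftP {d : ℕ} (h : ℝ) (ξ : Fin d → ℤ) (z : ℝ) : ℝ :=
  (Real.exp (z * latNorm ξ) + Real.exp (-(2 * h + z) * latNorm ξ)) /
    (1 + Real.exp (-2 * h * latNorm ξ))

/-- Multiplier of `∂_zψ̲/|ξ|`:
`𝓕(∂_zψ̲)(ξ,z) = |ξ| liftQ h ξ z ψ̂(ξ)`. -/
noncomputable def liftQ {d : ℕ} (h : ℝ) (ξ : Fin d → ℤ) (z : ℝ) : ℝ :=
  (Real.exp (z * latNorm ξ) - Real.exp (-(2 * h + z) * latNorm ξ)) /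
    (1 + Real.exp (-2 * h * latNorm ξ))

/-- Squared `H^{σ,μ}` norm of `∇_{x,z}ψ̲(·,z)`:
`|𝓕(∇_xψ̲)(ξ,z)|² + |𝓕(∂_zψ̲)(ξ,z)|² = |ξ|²(P² + Q²)|ψ̂(ξ)|²`. -/
noncomputable def liftGradSq {d : ℕ} (h σ μ : ℝ) (c : (Fin d → ℤ) → ℂ) (z : ℝ) : ℝ≥0∞ :=
  ∑' ξ : Fin d → ℤ, hWeight σ μ ξ *
    ENNReal.ofReal ((latNorm ξ) ^ 2 * ((liftP h ξ z) ^ 2 + (liftQ h ξ z) ^ 2)) *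
    (‖c ξ‖₊ : ℝ≥0∞) ^ 2

/-- Fourier coefficients of `a(D_x)^{1/2}ψ`, where `a(ξ) = |ξ| tanh(h|ξ|)`. -/
noncomputable def aHalf {d : ℕ} (h : ℝ) (c : (Fin d → ℤ) → ℂ) :
    (Fin d → ℤ) → ℂ :=
  fun ξ => (Real.sqrt (latNorm ξ * Real.tanh (h * latNorm ξ)) : ℂ) * c ξ


namespace St16



lemma tanh_formula (x : ℝ) :
    Real.tanh x = (1 - Real.exp (-(2*x))) / (1 + Real.exp (-(2*x))) := by
  have h1 : Real.exp (-(2*x)) = Real.exp (-x) * Real.exp (-x) := by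
    rw [← Real.exp_add]; ring_nf
  have h2 : Real.exp x * Real.exp (-x) = 1 := by rw [← Real.exp_add]; simp
  rw [Real.tanh_eq_sinh_div_cosh, Real.sinh_eq, Real.cosh_eq, h1]
  have h3 : Real.exp x + Real.exp (-x) ≠ 0 := by positivity
  have h4 : 1 + Real.exp (-x) * Real.exp (-x) ≠ 0 := by positivity
  field_simp
  nlinarith [h2, Real.exp_pos x, Real.exp_pos (-x)]

lemma tanh_nn {x : ℝ} (hx : 0 ≤ x) : 0 ≤ Real.tanh x := by
  rw [tanh_formula]
  have h1 : Real.exp (-(2*x)) ≤ 1 := Real.exp_le_one_iff.2 (by linarith)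
  have h2 : (0:ℝ) < Real.exp (-(2*x)) := Real.exp_pos _
  apply div_nonneg <;> linarith

lemma tanh_lb {x : ℝ} (hx : 0 ≤ x) : x / (1 + 2*x) ≤ Real.tanh x := by
  rw [tanh_formula]
  set u := Real.exp (-(2*x)) with hu'
  have hu0 : 0 < u := Real.exp_pos _
  have h1 : (0:ℝ) < 1 + 2*x := by linarith
  have h2 : (0:ℝ) < 1 + u := by linarith
  rw [div_le_div_iff₀ h1 h2]
  have hu1 : u * (1+2*x) ≤ 1 := by
    have h5 := Real.add_one_le_exp (2*x)
    have h6 : u * Real.exp (2*x) = 1 := by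
      rw [hu', ← Real.exp_add]; simp
    nlinarith
  have hu2 : u ≤ 1 := Real.exp_le_one_iff.2 (by linarith)
  nlinarith



noncomputable def Pf (h r z : ℝ) : ℝ :=
  (Real.exp (z * r) + Real.exp (-(2 * h + z) * r)) / (1 + Real.exp (-2 * h * r))

noncomputable def Qf (h r z : ℝ) : ℝ :=
  (Real.exp (z * r) - Real.exp (-(2 * h + z) * r)) / (1 + Real.exp (-2 * h * r))

lemma sq_bound {h r z : ℝ} (hh : 0 < h) (hr : 0 ≤ r) (hz1 : -h < z) (hz2 : z < 0) :
    Pf h r z ^ 2 + Qf h r z ^ 2 ≤ 8 := by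
  have hA : Real.exp (z * r) ≤ 1 := Real.exp_le_one_iff.2 (by nlinarith)
  have hB : Real.exp (-(2 * h + z) * r) ≤ 1 := Real.exp_le_one_iff.2 (by nlinarith)
  have hA0 : 0 < Real.exp (z * r) := Real.exp_pos _
  have hB0 : 0 < Real.exp (-(2 * h + z) * r) := Real.exp_pos _
  have hD : (1:ℝ) ≤ 1 + Real.exp (-2 * h * r) := by
    have := Real.exp_pos (-2 * h * r); linarith
  have hD0 : (0:ℝ) < 1 + Real.exp (-2 * h * r) := by linarith
  unfold Pf Qf
  rw [div_pow, div_pow]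
  have h1 : (1:ℝ) ≤ (1 + Real.exp (-2 * h * r))^2 := by nlinarith
  have h2 : (Real.exp (z * r) + Real.exp (-(2 * h + z) * r))^2 ≤ 4 := by nlinarith
  have h3 : (Real.exp (z * r) - Real.exp (-(2 * h + z) * r))^2 ≤ 4 := by nlinarith
  have h4 : (Real.exp (z * r) + Real.exp (-(2 * h + z) * r))^2 / (1 + Real.exp (-2 * h * r))^2
      ≤ (Real.exp (z * r) + Real.exp (-(2 * h + z) * r))^2 :=
    div_le_self (by positivity) h1
  have h5 : (Real.exp (z * r) - Real.exp (-(2 * h + z) * r))^2 / (1 + Real.exp (-2 * h * r))^2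
      ≤ (Real.exp (z * r) - Real.exp (-(2 * h + z) * r))^2 :=
    div_le_self (by positivity) h1
  linarith

lemma pointwise_bound {h r z : ℝ} (hh : 0 < h) (hr : 0 ≤ r) (hz1 : -h < z) (hz2 : z < 0) :
    r^2 * (Pf h r z ^ 2 + Qf h r z ^ 2) ≤
      (8*(1+2*h)/h) * (Real.sqrt (1 + r^2) * (r * Real.tanh (h*r))) := by
  have hPQ := sq_bound (r := r) (z := z) hh hr hz1 hz2
  have hPQ0 : 0 ≤ Pf h r z ^ 2 + Qf h r z ^ 2 := by positivity
  have hT0 : 0 ≤ Real.tanh (h*r) := tanh_nn (by positivity)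
  have hT : h*r / (1 + 2*(h*r)) ≤ Real.tanh (h*r) := tanh_lb (by positivity)
  have hd : (0:ℝ) < 1 + 2*(h*r) := by positivity
  have hT' : h*r ≤ Real.tanh (h*r) * (1 + 2*(h*r)) := by
    rw [div_le_iff₀ hd] at hT; linarith
  have hsq := Real.sq_sqrt (show (0:ℝ) ≤ 1 + r^2 by positivity)
  have hsn := Real.sqrt_nonneg (1 + r^2)
  have hS1 : (1:ℝ) ≤ Real.sqrt (1 + r^2) := by nlinarith
  have hSr : r ≤ Real.sqrt (1 + r^2) := by nlinarith
  rw [div_mul_eq_mul_div, le_div_iff₀ hh]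
  -- goal : r^2 * (P^2+Q^2) * h ≤ 8*(1+2*h) * (√(1+r²) * (r * tanh (h*r)))
  have key : 8 * (h * r) * r ≤ 8*(1+2*h) * (Real.sqrt (1 + r^2) * (r * Real.tanh (h*r))) := by
    have s1 : 8 * (h*r) * r ≤ 8 * (Real.tanh (h*r) * (1 + 2*(h*r))) * r := by nlinarith
    have s2 : (1 + 2*(h*r)) ≤ (1+2*h) * Real.sqrt (1+r^2) := by nlinarith
    have s3 : 8 * (Real.tanh (h*r) * (1 + 2*(h*r))) * r
        ≤ 8 * (Real.tanh (h*r) * ((1+2*h) * Real.sqrt (1+r^2))) * r := by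
      nlinarith [mul_le_mul_of_nonneg_left s2 (show (0:ℝ) ≤ 8 * Real.tanh (h*r) * r by positivity)]
    nlinarith
  nlinarith [mul_le_mul_of_nonneg_left hPQ (show (0:ℝ) ≤ r^2 * h by positivity)]

lemma int_exp_mul (c a b : ℝ) (hc : c ≠ 0) :
    ∫ z in a..b, Real.exp (c*z) = (Real.exp (c*b) - Real.exp (c*a))/c := by
  rw [intervalIntegral.integral_comp_mul_left (fun x => Real.exp x) hc, integral_exp]
  rw [smul_eq_mul, div_eq_inv_mul]

lemma cont_inner (h r : ℝ) : Continuous fun z : ℝ => r^2 * (Pf h r z^2 + Qf h r z^2) := by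
  have hA : Continuous fun z : ℝ => Real.exp (z * r) := by continuity
  have hB : Continuous fun z : ℝ => Real.exp (-(2*h+z) * r) := by continuity
  exact continuous_const.mul ((((hA.add hB).div_const _).pow 2).add
    (((hA.sub hB).div_const _).pow 2))

lemma integral_bound {h r : ℝ} (hh : 0 < h) (hr : 0 ≤ r) :
    ∫⁻ z in Set.Ioo (-h) (0:ℝ), ENNReal.ofReal (r^2 * (Pf h r z^2 + Qf h r z^2)) ≤
      ENNReal.ofReal (8 * (r * Real.tanh (h*r))) := by
  rcases eq_or_lt_of_le hr with hr0 | hr0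
  · subst r
    have hz : ∀ z : ℝ, (0:ℝ)^2 * (Pf h 0 z^2 + Qf h 0 z^2) = 0 := fun z => by ring
    simp only [hz, ENNReal.ofReal_zero, lintegral_zero]
    exact zero_le
  -- pointwise bound by g
  set g : ℝ → ℝ := fun z => 4*r^2 * (Real.exp ((2*r)*z) + Real.exp (-(4*h*r)) * Real.exp ((-(2*r))*z)) with hg
  have hgc : Continuous g := by
    apply continuous_const.mul
    apply Continuous.add
    · continuity
    · continuity
  have hgn : ∀ z : ℝ, 0 ≤ g z := by
    intro z
    have := Real.exp_pos ((2*r)*z)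
    have := Real.exp_pos (-(4*h*r))
    have := Real.exp_pos ((-(2*r))*z)
    positivity
  have hpt : ∀ z ∈ Set.Ioo (-h) (0:ℝ), r^2 * (Pf h r z^2 + Qf h r z^2) ≤ g z := by
    intro z hz
    have hD : (1:ℝ) ≤ 1 + Real.exp (-2 * h * r) := by
      have := Real.exp_pos (-2 * h * r); linarith
    have hD1 : (1:ℝ) ≤ (1 + Real.exp (-2 * h * r))^2 := by nlinarith
    have hA0 : (0:ℝ) < Real.exp (z * r) := Real.exp_pos _
    have hB0 : (0:ℝ) < Real.exp (-(2 * h + z) * r) := Real.exp_pos _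
    have e1 : Real.exp (z*r) ^ 2 = Real.exp ((2*r)*z) := by
      rw [← Real.exp_nat_mul]; ring_nf
    have e2 : Real.exp (-(2*h+z)*r) ^ 2 = Real.exp (-(4*h*r)) * Real.exp ((-(2*r))*z) := by
      rw [← Real.exp_nat_mul, ← Real.exp_add]; ring_nf
    have hP : Pf h r z ^ 2 ≤ (Real.exp (z*r) + Real.exp (-(2*h+z)*r))^2 := by
      unfold Pf; rw [div_pow]
      exact div_le_self (by positivity) hD1
    have hQ : Qf h r z ^ 2 ≤ (Real.exp (z*r) - Real.exp (-(2*h+z)*r))^2 := by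
      unfold Qf; rw [div_pow]
      exact div_le_self (by positivity) hD1
    have : Pf h r z ^2 + Qf h r z^2 ≤ 2 * (Real.exp (z*r)^2 + Real.exp (-(2*h+z)*r)^2) := by
      nlinarith
    rw [hg]
    simp only
    rw [← e1, ← e2]
    nlinarith [sq_nonneg r]
  -- integral of g
  have hint : IntegrableOn g (Set.Ioo (-h) (0:ℝ)) :=
    (hgc.integrableOn_Icc (a := -h) (b := 0)).mono_set Set.Ioo_subset_Icc_self
  have hIeq : ∫ z in Set.Ioo (-h) (0:ℝ), g z = 2*r*(1 - Real.exp (-(2*h*r))^2) := by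
    rw [← integral_Ioc_eq_integral_Ioo, ← intervalIntegral.integral_of_le (by linarith : -h ≤ (0:ℝ))]
    have h2r : (2*r) ≠ 0 := by positivity
    have hm2r : (-(2*r)) ≠ 0 := neg_ne_zero.2 h2r
    have i1 : ∫ z in (-h)..(0:ℝ), Real.exp ((2*r)*z) =
        (Real.exp 0 - Real.exp ((2*r)*(-h)))/(2*r) := by
      rw [int_exp_mul _ _ _ h2r]; norm_num
    have i2 : ∫ z in (-h)..(0:ℝ), Real.exp ((-(2*r))*z) =
        (Real.exp (2*h*r) - 1)/(2*r) := by
      rw [int_exp_mul _ _ _ hm2r]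
      rw [show ((-(2*r))*(-h)) = 2*h*r by ring, show ((-(2*r))*(0:ℝ)) = 0 by ring, Real.exp_zero]
      rw [div_neg]; ring
    have e3 : (∫ z in (-h)..(0:ℝ), g z) = 4*r^2 * ((∫ z in (-h)..(0:ℝ), Real.exp ((2*r)*z))
        + Real.exp (-(4*h*r)) * (∫ z in (-h)..(0:ℝ), Real.exp ((-(2*r))*z))) := by
      rw [hg]
      rw [intervalIntegral.integral_const_mul]
      congr 1
      rw [intervalIntegral.integral_add]
      · congr 1
        exact intervalIntegral.integral_const_mul _ _
      · apply Continuous.intervalIntegrable; continuity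
      · apply Continuous.intervalIntegrable; continuity
    rw [e3, i1, i2]
    have u1 : Real.exp ((2*r)*(-h)) = Real.exp (-(2*h*r)) := by ring_nf
    have u3 : Real.exp (-(4*h*r)) = Real.exp (-(2*h*r)) * Real.exp (-(2*h*r)) := by
      rw [← Real.exp_add]; ring_nf
    have u4 : Real.exp (-(2*h*r)) * Real.exp (2*h*r) = 1 := by rw [← Real.exp_add]; simp
    rw [u1, u3, Real.exp_zero]
    set u := Real.exp (-(2*h*r))
    set E := Real.exp (2*h*r)
    field_simp
    linear_combination (4*u) * u4
  have hfinal : 2*r*(1 - Real.exp (-(2*h*r))^2) ≤ 8 * (r * Real.tanh (h*r)) := by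
    set u := Real.exp (-(2*h*r)) with hu
    have hu0 : (0:ℝ) < u := Real.exp_pos _
    have hu1 : u ≤ 1 := Real.exp_le_one_iff.2 (by nlinarith)
    have hTu : Real.tanh (h*r) * (1+u) = 1-u := by
      rw [tanh_formula]
      have : Real.exp (-(2*(h*r))) = u := by rw [hu]; ring_nf
      rw [this]
      field_simp
    have hT0 : 0 ≤ Real.tanh (h*r) := tanh_nn (by positivity)
    rw [show (1:ℝ)-u^2 = Real.tanh (h*r)*(1+u)^2 from by linear_combination (-(1+u))*hTu]
    nlinarith [mul_nonneg (mul_nonneg hr hT0) (show (0:ℝ) ≤ 4 - (1+u)^2 by nlinarith)]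
  calc ∫⁻ z in Set.Ioo (-h) (0:ℝ), ENNReal.ofReal (r^2 * (Pf h r z^2 + Qf h r z^2))
      ≤ ∫⁻ z in Set.Ioo (-h) (0:ℝ), ENNReal.ofReal (g z) := by
        apply setLIntegral_mono hgc.measurable.ennreal_ofReal
        intro z hz
        exact ENNReal.ofReal_le_ofReal (hpt z hz)
    _ = ENNReal.ofReal (∫ z in Set.Ioo (-h) (0:ℝ), g z) := by
        rw [← ofReal_integral_eq_lintegral_ofReal hint
          (Filter.Eventually.of_forall (fun z => hgn z))]
    _ ≤ ENNReal.ofReal (8 * (r * Real.tanh (h*r))) := by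
        rw [hIeq]; exact ENNReal.ofReal_le_ofReal hfinal


lemma latNorm_nonneg {d : ℕ} (ξ : Fin d → ℤ) : 0 ≤ latNorm ξ := Real.sqrt_nonneg _

lemma latJap_eq {d : ℕ} (ξ : Fin d → ℤ) : latJap ξ = Real.sqrt (1 + (latNorm ξ)^2) := by
  unfold latJap latNorm
  rw [Real.sq_sqrt (Finset.sum_nonneg fun i _ => sq_nonneg _)]

lemma latJap_pos {d : ℕ} (ξ : Fin d → ℤ) : 0 < latJap ξ := by
  unfold latJap
  apply Real.sqrt_pos.2
  have : (0:ℝ) ≤ ∑ i, ((ξ i : ℝ))^2 := Finset.sum_nonneg fun i _ => sq_nonneg _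
  linarith

lemma aHalf_sq {d : ℕ} {h : ℝ} (hh : 0 < h) (c : (Fin d → ℤ) → ℂ) (ξ : Fin d → ℤ) :
    ((‖aHalf h c ξ‖₊ : ℝ≥0∞))^2 =
      ENNReal.ofReal (latNorm ξ * Real.tanh (h * latNorm ξ)) * (‖c ξ‖₊ : ℝ≥0∞)^2 := by
  have ht : 0 ≤ latNorm ξ * Real.tanh (h * latNorm ξ) :=
    mul_nonneg (latNorm_nonneg ξ) (tanh_nn (mul_nonneg hh.le (latNorm_nonneg ξ)))
  unfold aHalf
  rw [nnnorm_mul, ENNReal.coe_mul, mul_pow]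
  congr 1
  rw [Complex.nnnorm_real, ← enorm_eq_nnnorm, Real.enorm_eq_ofReal (Real.sqrt_nonneg _),
    ← ENNReal.ofReal_pow (Real.sqrt_nonneg _), Real.sq_sqrt ht]

lemma weight_bound {d : ℕ} {h : ℝ} (σ μ : ℝ) (hh : 0 < h) (ξ : Fin d → ℤ) {z : ℝ}
    (hz : z ∈ Set.Ioo (-h) (0:ℝ)) :
    hWeight σ (μ - 1/2) ξ *
        ENNReal.ofReal ((latNorm ξ)^2 * (liftP h ξ z^2 + liftQ h ξ z^2))
      ≤ ENNReal.ofReal (8*(1+2*h)/h) *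
          (hWeight σ μ ξ * ENNReal.ofReal (latNorm ξ * Real.tanh (h * latNorm ξ))) := by
  have hJ : 0 < latJap ξ := latJap_pos ξ
  have hr := latNorm_nonneg ξ
  have hC0 : (0:ℝ) < 8*(1+2*h)/h := by
    apply div_pos (by nlinarith) hh
  have hG : (0:ℝ) ≤ (latNorm ξ)^2 * (liftP h ξ z^2 + liftQ h ξ z^2) := by positivity
  have hE : (0:ℝ) < Real.exp (2 * σ * latNorm ξ) := Real.exp_pos _
  have hJp : (0:ℝ) < latJap ξ ^ (2*μ) := Real.rpow_pos_of_pos hJ _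
  have hJp' : (0:ℝ) ≤ latJap ξ ^ (2*(μ-1/2)) := (Real.rpow_pos_of_pos hJ _).le
  unfold hWeight
  rw [← ENNReal.ofReal_mul (by positivity), ← ENNReal.ofReal_mul (by positivity),
    ← ENNReal.ofReal_mul hC0.le]
  apply ENNReal.ofReal_le_ofReal
  -- real inequality
  have key : (latNorm ξ)^2 * (liftP h ξ z^2 + liftQ h ξ z^2)
      ≤ (8*(1+2*h)/h) * (latJap ξ * (latNorm ξ * Real.tanh (h * latNorm ξ))) := by
    have := pointwise_bound (r := latNorm ξ) (z := z) hh hr hz.1 hz.2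
    rw [latJap_eq]
    exact this
  have hrw : latJap ξ ^ (2*(μ-1/2)) = latJap ξ ^ (2*μ) / latJap ξ := by
    rw [show 2*(μ-1/2) = 2*μ - 1 by ring, Real.rpow_sub hJ, Real.rpow_one]
  rw [hrw]
  have hdiv : ((latNorm ξ)^2 * (liftP h ξ z^2 + liftQ h ξ z^2)) / latJap ξ
      ≤ (8*(1+2*h)/h) * (latNorm ξ * Real.tanh (h * latNorm ξ)) := by
    rw [div_le_iff₀ hJ]
    calc (latNorm ξ)^2 * (liftP h ξ z^2 + liftQ h ξ z^2)
        ≤ (8*(1+2*h)/h) * (latJap ξ * (latNorm ξ * Real.tanh (h * latNorm ξ))) := key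
      _ = (8*(1+2*h)/h) * (latNorm ξ * Real.tanh (h * latNorm ξ)) * latJap ξ := by ring
  calc Real.exp (2 * σ * latNorm ξ) * (latJap ξ ^ (2*μ) / latJap ξ) *
        ((latNorm ξ)^2 * (liftP h ξ z^2 + liftQ h ξ z^2))
      = (Real.exp (2 * σ * latNorm ξ) * latJap ξ ^ (2*μ)) *
          (((latNorm ξ)^2 * (liftP h ξ z^2 + liftQ h ξ z^2)) / latJap ξ) := by ring
    _ ≤ (Real.exp (2 * σ * latNorm ξ) * latJap ξ ^ (2*μ)) *
          ((8*(1+2*h)/h) * (latNorm ξ * Real.tanh (h * latNorm ξ))) :=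
        mul_le_mul_of_nonneg_left hdiv (by positivity)
    _ = (8*(1+2*h)/h) * (Real.exp (2 * σ * latNorm ξ) * latJap ξ ^ (2*μ) *
          (latNorm ξ * Real.tanh (h * latNorm ξ))) := by ring

lemma rpow_half_mul_le {a b : ℝ} (hb : 0 ≤ b) (hab : a ≤ b^2) (S : ℝ≥0∞) :
    (ENNReal.ofReal a * S) ^ (1/2:ℝ) ≤ ENNReal.ofReal b * S ^ (1/2:ℝ) := by
  rw [ENNReal.mul_rpow_of_nonneg _ _ (by norm_num : (0:ℝ) ≤ 1/2)]
  refine mul_le_mul_left ?_ _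
  have h1 : ENNReal.ofReal a ≤ (ENNReal.ofReal b)^2 := by
    rw [← ENNReal.ofReal_pow hb]; exact ENNReal.ofReal_le_ofReal hab
  calc (ENNReal.ofReal a)^(1/2:ℝ) ≤ ((ENNReal.ofReal b)^2)^(1/2:ℝ) :=
        ENNReal.rpow_le_rpow h1 (by norm_num)
    _ = ENNReal.ofReal b := by
        rw [← ENNReal.rpow_natCast _ 2, ← ENNReal.rpow_mul]
        norm_num

end St16

open St16

/-- harmonic lifting estimates. The solution `ψ̲` of
`∂_z²ψ̲ + Δ_xψ̲ = 0`, `ψ̲|_{z=0} = ψ`, `∂_zψ̲|_{z=-h} = 0` (given by the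
explicit multipliers `liftP`, `liftQ`) satisfies
`‖∇_{x,z}ψ̲‖_{L²((-h,0),H^{σ,μ})} ≤ C‖a(D)^{1/2}ψ‖_{H^{σ,μ}}` and
`‖∇_{x,z}ψ̲‖_{L^∞((-h,0),H^{σ,μ-1/2})} ≤ C‖a(D)^{1/2}ψ‖_{H^{σ,μ}}`. -/
theorem statement16 (d : ℕ) (h μ : ℝ) (hh : 0 < h) :
    ∃ C : ℝ, 0 < C ∧ ∀ σ : ℝ, 0 ≤ σ → ∀ c : (Fin d → ℤ) → ℂ,
      hNormSq σ μ (aHalf h c) ≠ ⊤ →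
      ((∫⁻ z in Set.Ioo (-h) (0 : ℝ), liftGradSq h σ μ c z) ^ (1/2 : ℝ)
          ≤ ENNReal.ofReal C * hNorm σ μ (aHalf h c)) ∧
      (∀ z ∈ Set.Ioo (-h) (0 : ℝ),
          (liftGradSq h σ (μ - 1/2) c z) ^ (1/2 : ℝ)
            ≤ ENNReal.ofReal C * hNorm σ μ (aHalf h c)) := by
  have hC0 : (0:ℝ) < 8*(1+2*h)/h := div_pos (by nlinarith) hh
  refine ⟨8*(1+2*h)/h + 8, by linarith, ?_⟩
  intro σ hσ c hfin
  have hCsq8 : (8:ℝ) ≤ (8*(1+2*h)/h + 8)^2 := by nlinarith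
  have hCsqC0 : 8*(1+2*h)/h ≤ (8*(1+2*h)/h + 8)^2 := by nlinarith
  have hCnn : (0:ℝ) ≤ 8*(1+2*h)/h + 8 := by linarith
  -- representation of the aHalf norm
  have hSrep : hNormSq σ μ (aHalf h c) =
      ∑' ξ : Fin d → ℤ, hWeight σ μ ξ *
        ENNReal.ofReal (latNorm ξ * Real.tanh (h * latNorm ξ)) * (‖c ξ‖₊ : ℝ≥0∞)^2 := by
    unfold hNormSq
    refine tsum_congr fun ξ => ?_
    rw [aHalf_sq hh c ξ]; ring
  have hnorm_def : hNorm σ μ (aHalf h c) = (hNormSq σ μ (aHalf h c)) ^ (1/2:ℝ) := rfl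
  constructor
  · -- L² estimate
    have hmeas : ∀ ξ : Fin d → ℤ, AEMeasurable
        (fun z : ℝ => hWeight σ μ ξ *
          ENNReal.ofReal ((latNorm ξ)^2 * (liftP h ξ z^2 + liftQ h ξ z^2)) *
          (‖c ξ‖₊ : ℝ≥0∞)^2) (volume.restrict (Set.Ioo (-h) (0:ℝ))) := by
      intro ξ
      exact ((((cont_inner h (latNorm ξ)).measurable.ennreal_ofReal).const_mul
        _).mul_const _).aemeasurable
    have step1 : (∫⁻ z in Set.Ioo (-h) (0:ℝ), liftGradSq h σ μ c z) =
        ∑' ξ : Fin d → ℤ, ∫⁻ z in Set.Ioo (-h) (0:ℝ),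
          (hWeight σ μ ξ *
            ENNReal.ofReal ((latNorm ξ)^2 * (liftP h ξ z^2 + liftQ h ξ z^2)) *
            (‖c ξ‖₊ : ℝ≥0∞)^2) := by
      unfold liftGradSq
      exact lintegral_tsum hmeas
    have step2 : ∀ ξ : Fin d → ℤ, (∫⁻ z in Set.Ioo (-h) (0:ℝ),
          (hWeight σ μ ξ *
            ENNReal.ofReal ((latNorm ξ)^2 * (liftP h ξ z^2 + liftQ h ξ z^2)) *
            (‖c ξ‖₊ : ℝ≥0∞)^2))
        ≤ ENNReal.ofReal 8 * (hWeight σ μ ξ *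
            ENNReal.ofReal (latNorm ξ * Real.tanh (h * latNorm ξ)) *
            (‖c ξ‖₊ : ℝ≥0∞)^2) := by
      intro ξ
      rw [lintegral_mul_const' _ _ (ENNReal.pow_ne_top ENNReal.coe_ne_top),
        lintegral_const_mul' (hWeight σ μ ξ) _
          (show hWeight σ μ ξ ≠ ⊤ from ENNReal.ofReal_ne_top)]
      have hb := integral_bound (r := latNorm ξ) hh (latNorm_nonneg ξ)
      calc hWeight σ μ ξ * (∫⁻ z in Set.Ioo (-h) (0:ℝ),
            ENNReal.ofReal ((latNorm ξ)^2 * (liftP h ξ z^2 + liftQ h ξ z^2))) *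
            (‖c ξ‖₊ : ℝ≥0∞)^2
          ≤ hWeight σ μ ξ * ENNReal.ofReal (8 * (latNorm ξ * Real.tanh (h * latNorm ξ))) *
            (‖c ξ‖₊ : ℝ≥0∞)^2 :=
            mul_le_mul' (mul_le_mul_right hb _) le_rfl
        _ = ENNReal.ofReal 8 * (hWeight σ μ ξ *
            ENNReal.ofReal (latNorm ξ * Real.tanh (h * latNorm ξ)) *
            (‖c ξ‖₊ : ℝ≥0∞)^2) := by
            rw [ENNReal.ofReal_mul (by norm_num : (0:ℝ) ≤ 8)]; ring
    have hfull : (∫⁻ z in Set.Ioo (-h) (0:ℝ), liftGradSq h σ μ c z)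
        ≤ ENNReal.ofReal 8 * hNormSq σ μ (aHalf h c) := by
      rw [step1, hSrep, ← ENNReal.tsum_mul_left]
      exact ENNReal.tsum_le_tsum step2
    calc (∫⁻ z in Set.Ioo (-h) (0:ℝ), liftGradSq h σ μ c z) ^ (1/2:ℝ)
        ≤ (ENNReal.ofReal 8 * hNormSq σ μ (aHalf h c)) ^ (1/2:ℝ) :=
          ENNReal.rpow_le_rpow hfull (by norm_num)
      _ ≤ ENNReal.ofReal (8*(1+2*h)/h + 8) * (hNormSq σ μ (aHalf h c)) ^ (1/2:ℝ) :=
          rpow_half_mul_le hCnn hCsq8 _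
  · -- L∞ estimate
    intro z hz
    have hfull : liftGradSq h σ (μ - 1/2) c z
        ≤ ENNReal.ofReal (8*(1+2*h)/h) * hNormSq σ μ (aHalf h c) := by
      rw [hSrep, ← ENNReal.tsum_mul_left]
      unfold liftGradSq
      refine ENNReal.tsum_le_tsum fun ξ => ?_
      calc hWeight σ (μ - 1/2) ξ *
            ENNReal.ofReal ((latNorm ξ)^2 * (liftP h ξ z^2 + liftQ h ξ z^2)) *
            (‖c ξ‖₊ : ℝ≥0∞)^2
          ≤ (ENNReal.ofReal (8*(1+2*h)/h) *
              (hWeight σ μ ξ * ENNReal.ofReal (latNorm ξ * Real.tanh (h * latNorm ξ)))) *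
            (‖c ξ‖₊ : ℝ≥0∞)^2 :=
            mul_le_mul' (weight_bound σ μ hh ξ hz) le_rfl
        _ = ENNReal.ofReal (8*(1+2*h)/h) * (hWeight σ μ ξ *
              ENNReal.ofReal (latNorm ξ * Real.tanh (h * latNorm ξ)) *
              (‖c ξ‖₊ : ℝ≥0∞)^2) := by ring
    calc (liftGradSq h σ (μ - 1/2) c z) ^ (1/2:ℝ)
        ≤ (ENNReal.ofReal (8*(1+2*h)/h) * hNormSq σ μ (aHalf h c)) ^ (1/2:ℝ) :=
          ENNReal.rpow_le_rpow hfull (by norm_num)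
      _ ≤ ENNReal.ofReal (8*(1+2*h)/h + 8) * (hNormSq σ μ (aHalf h c)) ^ (1/2:ℝ) :=
          rpow_half_mul_le hCnn hCsqC0 _
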